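/- If f is a normalized, non-decreasing, submodular function and the agents N can be partitioned into groups such that actions of agents in different groups are 'independent' (i.e., f is additive across groups: f(A) = Σ_g f(A ∩ V_g) for any selection A), then running RAG separately within each group (fully disconnected across groups, fully connected within groups) yields f(S^RAG) ≥ (1/2) f(S*). -/

import Mathlib

/-- If `f` is normalized, non-decreasing and submodular, and the agents are partitioned
into groups across which `f` is additive (`f(A) = Σ_g f(A ∩ V_g)`), then running RAG
separately within each group (fully disconnected across groups, fully connected within
groups, i.e., sequential greedy within each group) yields `f(S^RAG) ≥ (1/2) f(S*)`. -/
theorem rag_group_additive_half {α G : Type*} [DecidableEq α] [Fintype α]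
    [DecidableEq G] [Fintype G] (n : ℕ)
    (Vs : Fin n → Finset α)
    (hne : ∀ i, (Vs i).Nonempty)
    (hdisjV : ∀ i j : Fin n, i ≠ j → Disjoint (Vs i) (Vs j))
    (grp : Fin n → G)
    (f : Finset α → ℝ)
    (hnorm : f ∅ = 0)
    (hmono : ∀ A B : Finset α, A ⊆ B → f A ≤ f B)
    (hsub : ∀ (A B : Finset α) (s : α), A ⊆ B →
      f (insert s B) - f B ≤ f (insert s A) - f A)
    (hadd : ∀ A : Finset α, f A = ∑ g : G,
      f (A.filter (fun a => a ∈ (Finset.univ.filter (fun i => grp i = g)).biUnion Vs)))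
    (s : Fin n → α) (hs : ∀ i, s i ∈ Vs i)
    (hgreedy : ∀ i : Fin n, ∀ y ∈ Vs i,
      f (insert y ((Finset.univ.filter (fun j => j < i ∧ grp j = grp i)).image s))
        - f ((Finset.univ.filter (fun j => j < i ∧ grp j = grp i)).image s)
      ≤ f (insert (s i) ((Finset.univ.filter (fun j => j < i ∧ grp j = grp i)).image s))
        - f ((Finset.univ.filter (fun j => j < i ∧ grp j = grp i)).image s))
    (sopt : Fin n → α) (hsopt : ∀ i, sopt i ∈ Vs i)
    (hopt : ∀ t : Fin n → α, (∀ i, t i ∈ Vs i) →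
      f (Finset.univ.image t) ≤ f (Finset.univ.image sopt)) :
    (1 / 2 : ℝ) * f (Finset.univ.image sopt) ≤ f (Finset.univ.image s) := by
  classical
  set pre : Fin n → Finset α := fun i =>
    (Finset.univ.filter (fun j => j < i ∧ grp j = grp i)).image s with hpre
  set S : Finset α := Finset.univ.image s with hS
  set T : Finset α := Finset.univ.image sopt with hT
  have hpreS : ∀ i, pre i ⊆ S := fun i =>
    Finset.image_subset_image (Finset.filter_subset _ _)
  -- filter of indices below k+1 is insert of ⟨k⟩
  have hfilt : ∀ (k : ℕ) (hk : k < n),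
      Finset.univ.filter (fun j : Fin n => (j : ℕ) < k + 1)
        = insert ⟨k, hk⟩ (Finset.univ.filter (fun j : Fin n => (j : ℕ) < k)) := by
    intro k hk
    ext j
    simp only [Finset.mem_filter, Finset.mem_univ, true_and, Finset.mem_insert,
      Fin.ext_iff]
    omega
  have hnotmem : ∀ (k : ℕ) (hk : k < n),
      (⟨k, hk⟩ : Fin n) ∉ Finset.univ.filter (fun j : Fin n => (j : ℕ) < k) := by
    intro k hk
    simp
  -- Lemma A: upper bound on f (S ∪ prefix of T)
  have hA : ∀ k : ℕ, k ≤ n →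
      f (S ∪ (Finset.univ.filter (fun j : Fin n => (j : ℕ) < k)).image sopt)
        ≤ f S + ∑ j ∈ Finset.univ.filter (fun j : Fin n => (j : ℕ) < k),
            (f (insert (sopt j) (pre j)) - f (pre j)) := by
    intro k hk
    induction k with
    | zero =>
        simp
    | succ k ih =>
        have hkn : k < n := by omega
        have h2 := ih (by omega)
        rw [hfilt k hkn, Finset.sum_insert (hnotmem k hkn), Finset.image_insert,
          Finset.union_insert]
        have h1 := hsub (pre ⟨k, hkn⟩)
          (S ∪ (Finset.univ.filter (fun j : Fin n => (j : ℕ) < k)).image sopt)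
          (sopt ⟨k, hkn⟩)
          (subset_trans (hpreS ⟨k, hkn⟩) Finset.subset_union_left)
        linarith
  -- Lemma B: the greedy marginals telescope to the per-group sum
  have hB : ∀ k : ℕ, k ≤ n →
      ∑ j ∈ Finset.univ.filter (fun j : Fin n => (j : ℕ) < k),
          (f (insert (s j) (pre j)) - f (pre j))
        = ∑ g : G,
            f ((Finset.univ.filter (fun j : Fin n => (j : ℕ) < k ∧ grp j = g)).image s) := by
    intro k hk
    induction k with
    | zero =>
        simp [hnorm]
    | succ k ih =>
        have hkn : k < n := by omega
        set i : Fin n := ⟨k, hkn⟩ with hi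
        have hpre_eq : pre i
            = (Finset.univ.filter (fun j : Fin n => (j : ℕ) < k ∧ grp j = grp i)).image s := by
          ext x
          simp only [hpre, Finset.mem_image, Finset.mem_filter, Finset.mem_univ,
            true_and, Fin.lt_def, hi]
        have hnew : ∀ g : G,
            (Finset.univ.filter (fun j : Fin n => (j : ℕ) < k + 1 ∧ grp j = g)).image s
              = if g = grp i then
                  insert (s i)
                    ((Finset.univ.filter (fun j : Fin n => (j : ℕ) < k ∧ grp j = g)).image s)
                else
                  (Finset.univ.filter (fun j : Fin n => (j : ℕ) < k ∧ grp j = g)).image s := by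
          intro g
          by_cases hg : g = grp i
          · rw [if_pos hg]
            have hset : Finset.univ.filter (fun j : Fin n => (j : ℕ) < k + 1 ∧ grp j = g)
                = insert i (Finset.univ.filter (fun j : Fin n => (j : ℕ) < k ∧ grp j = g)) := by
              ext j
              simp only [Finset.mem_filter, Finset.mem_univ, true_and, Finset.mem_insert]
              constructor
              · rintro ⟨hjk, hgj⟩
                rcases Nat.lt_succ_iff_lt_or_eq.1 hjk with h | h
                · exact Or.inr ⟨h, hgj⟩
                · exact Or.inl (Fin.ext h)
              · rintro (rfl | ⟨hjk, hgj⟩)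
                · exact ⟨by simp [hi], hg.symm⟩
                · exact ⟨by omega, hgj⟩
            rw [hset, Finset.image_insert]
          · rw [if_neg hg]
            congr 1
            ext j
            simp only [Finset.mem_filter, Finset.mem_univ, true_and]
            constructor
            · rintro ⟨hjk, hgj⟩
              refine ⟨?_, hgj⟩
              rcases Nat.lt_succ_iff_lt_or_eq.1 hjk with h | h
              · exact h
              · exfalso
                apply hg
                rw [← hgj]
                exact congrArg grp (Fin.ext h)
            · rintro ⟨hjk, hgj⟩
              exact ⟨by omega, hgj⟩
        rw [hfilt k hkn, Finset.sum_insert (hnotmem k hkn), ih (by omega)]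
        have hsplit :
            ∑ g : G,
                (f ((Finset.univ.filter (fun j : Fin n => (j : ℕ) < k + 1 ∧ grp j = g)).image s)
                  - f ((Finset.univ.filter (fun j : Fin n => (j : ℕ) < k ∧ grp j = g)).image s))
              = f (insert (s i) (pre i)) - f (pre i) := by
          rw [Finset.sum_eq_single (grp i)]
          · rw [hnew (grp i), if_pos rfl, hpre_eq]
          · intro g _ hg
            rw [hnew g, if_neg hg]
            ring
          · simp
        have hdist :
            ∑ g : G,
                (f ((Finset.univ.filter (fun j : Fin n => (j : ℕ) < k + 1 ∧ grp j = g)).image s)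
                  - f ((Finset.univ.filter (fun j : Fin n => (j : ℕ) < k ∧ grp j = g)).image s))
              = ∑ g : G,
                  f ((Finset.univ.filter (fun j : Fin n => (j : ℕ) < k + 1 ∧ grp j = g)).image s)
                - ∑ g : G,
                  f ((Finset.univ.filter (fun j : Fin n => (j : ℕ) < k ∧ grp j = g)).image s) :=
          Finset.sum_sub_distrib _ _
        linarith
  -- filter of indices below n is everything
  have hfull : Finset.univ.filter (fun j : Fin n => (j : ℕ) < n) = Finset.univ := by
    ext j
    simp [j.isLt]
  -- per-group part of S
  have hSg : ∀ g : G,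
      S.filter (fun a => a ∈ (Finset.univ.filter (fun i => grp i = g)).biUnion Vs)
        = (Finset.univ.filter (fun j : Fin n => (j : ℕ) < n ∧ grp j = g)).image s := by
    intro g
    ext x
    simp only [hS, Finset.mem_filter, Finset.mem_image, Finset.mem_biUnion,
      Finset.mem_univ, true_and]
    constructor
    · rintro ⟨⟨j, rfl⟩, i, hgi, hxi⟩
      refine ⟨j, ⟨j.isLt, ?_⟩, rfl⟩
      have hij : i = j := by
        by_contra hne'
        exact Finset.disjoint_left.1 (hdisjV i j hne') hxi (hs j)
      rw [← hij]; exact hgi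
    · rintro ⟨j, ⟨_, hgj⟩, rfl⟩
      exact ⟨⟨j, rfl⟩, j, hgj, hs j⟩
  have hAn := hA n le_rfl
  have hBn := hB n le_rfl
  rw [hfull] at hAn hBn
  have hfS : f S = ∑ j : Fin n, (f (insert (s j) (pre j)) - f (pre j)) := by
    rw [hBn, hadd S]
    exact Finset.sum_congr rfl fun g _ => by rw [hSg g]
  have hcmp : ∑ j : Fin n, (f (insert (sopt j) (pre j)) - f (pre j))
      ≤ ∑ j : Fin n, (f (insert (s j) (pre j)) - f (pre j)) :=
    Finset.sum_le_sum fun j _ => hgreedy j (sopt j) (hsopt j)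
  have hTS : f T ≤ f (S ∪ T) := hmono _ _ Finset.subset_union_right
  rw [← hT] at hAn
  linarith
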